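/- For every positive integer n, ζ(2n) = ∑_{k=1}^∞ 1/k^{2n} = (−1)^{n+1} π^{2n} Λ_n'(1) / 2, where Λ_n is the n-th Lidstone polynomial. -/

import Mathlib

open Polynomial

/-- Symmetry of Bernoulli polynomials: `B_n(1-X) = (-1)^n B_n(X)`. -/
private lemma bern_comp_one_sub (n : ℕ) :
    ((Polynomial.bernoulli n).comp (1 - X) : ℚ[X])
      = (-1 : ℚ) ^ n • Polynomial.bernoulli n := by
  induction n with
  | zero => simp [Polynomial.bernoulli_zero]
  | succ n ih =>
    set d : ℚ[X] := (Polynomial.bernoulli (n + 1)).comp (1 - X)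
      - (-1 : ℚ) ^ (n + 1) • Polynomial.bernoulli (n + 1) with hd
    have hderiv : derivative d = 0 := by
      rw [hd, derivative_sub, derivative_comp, derivative_smul,
        Polynomial.derivative_bernoulli_add_one]
      have h1 : derivative (1 - X : ℚ[X]) = -1 := by simp
      rw [h1, mul_comp]
      simp only [add_comp, natCast_comp, one_comp, ih, smul_eq_C_mul, map_pow, map_neg, map_one]
      ring
    have hconst : d = C (d.coeff 0) := Polynomial.eq_C_of_derivative_eq_zero hderiv
    have heval : d.eval 1 = 0 := by
      rw [hd]
      simp only [eval_sub, eval_comp, eval_sub, eval_one, eval_X, sub_self, eval_smul,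
        Polynomial.bernoulli_eval_zero, Polynomial.bernoulli_eval_one, smul_eq_mul]
      rw [bernoulli'_eq_bernoulli]
      ring_nf
      rw [mul_comm n 2, pow_mul]
      norm_num
    have : d.coeff 0 = 0 := by
      have := heval
      rw [hconst] at this
      simpa using this
    have hd0 : d = 0 := by rw [hconst, this, map_zero]
    rw [hd, sub_eq_zero] at hd0
    exact hd0

private lemma bern_odd_eval_half (n : ℕ) :
    (Polynomial.bernoulli (2 * n + 1)).eval (1 / 2 : ℚ) = 0 := by
  have h := congrArg (Polynomial.eval (1 / 2 : ℚ)) (bern_comp_one_sub (2 * n + 1))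
  rw [eval_comp] at h
  norm_num [pow_succ, pow_mul, eval_smul, smul_eq_mul] at h
  linarith

/-- Uniqueness: a polynomial is determined by its second derivative and values at 0, 1. -/
private lemma poly_unique (p q : ℝ[X])
    (h2 : derivative (derivative p) = derivative (derivative q))
    (h0 : p.eval 0 = q.eval 0) (h1 : p.eval 1 = q.eval 1) : p = q := by
  set d := p - q with hd
  have hdd : derivative (derivative d) = 0 := by
    rw [hd, derivative_sub, derivative_sub, h2, sub_self]
  have h1' : derivative d = C ((derivative d).coeff 0) :=
    Polynomial.eq_C_of_derivative_eq_zero hdd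
  set c := (derivative d).coeff 0 with hc
  have h2' : derivative (d - C c * X) = 0 := by
    rw [derivative_sub, derivative_mul, derivative_C, derivative_X, ← h1']
    ring
  have h3 : d - C c * X = C ((d - C c * X).coeff 0) :=
    Polynomial.eq_C_of_derivative_eq_zero h2'
  set e := (d - C c * X).coeff 0 with he
  have hdeq : d = C c * X + C e := by
    have := h3
    rw [sub_eq_iff_eq_add] at this
    rw [this]; ring
  have hd0 : d.eval 0 = 0 := by rw [hd]; simp [h0]
  have hd1 : d.eval 1 = 0 := by rw [hd]; simp [h1]
  rw [hdeq] at hd0 hd1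
  simp at hd0 hd1
  have hc0 : c = 0 := by linarith
  have hzero : d = 0 := by rw [hdeq, hc0, hd0]; simp
  rw [hd, sub_eq_zero] at hzero
  exact hzero

noncomputable def Lid (n : ℕ) : ℝ[X] :=
  Polynomial.C (2 * 4 ^ n / Nat.factorial (2 * n + 1) : ℝ) *
    ((Polynomial.bernoulli (2 * n + 1)).map (algebraMap ℚ ℝ)).comp
      (Polynomial.C (1 / 2 : ℝ) * (X + 1))


private lemma eval_map_rat (p : ℚ[X]) (x : ℚ) :
    (p.map (algebraMap ℚ ℝ)).eval ((x : ℝ)) = ((p.eval x : ℚ) : ℝ) := by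
  rw [show ((x : ℝ)) = algebraMap ℚ ℝ x from (eq_ratCast _ x).symm, eval_map,
    Polynomial.eval₂_at_apply]
  simp [eq_ratCast]

private lemma deriv_comp_q (p : ℚ[X]) :
    derivative ((p.map (algebraMap ℚ ℝ)).comp (Polynomial.C (1 / 2 : ℝ) * (X + 1)))
      = Polynomial.C (1 / 2 : ℝ) *
        ((derivative p).map (algebraMap ℚ ℝ)).comp (Polynomial.C (1 / 2 : ℝ) * (X + 1)) := by
  rw [derivative_comp, derivative_map]
  congr 1
  simp

private lemma deriv_bern_C (k : ℕ) :
    derivative (Polynomial.bernoulli (k + 1))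
      = Polynomial.C ((k : ℚ) + 1) * Polynomial.bernoulli k := by
  rw [Polynomial.derivative_bernoulli_add_one]
  congr 1
  rw [← C_eq_natCast, ← C_1, ← C_add]

private lemma Lid_zero : Lid 0 = X := by
  have hb1 : (Polynomial.bernoulli 1 : ℚ[X]) = X - Polynomial.C (1 / 2 : ℚ) := by
    simp [Polynomial.bernoulli, Finset.sum_range_succ]
    rw [sub_eq_add_neg, ← map_neg]
    congr 1
    norm_num
  rw [Lid, hb1]
  simp only [Polynomial.map_sub, Polynomial.map_X, Polynomial.map_C, sub_comp, X_comp, C_comp]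
  have h2 : algebraMap ℚ ℝ (1 / 2 : ℚ) = (1 / 2 : ℝ) := by norm_num
  rw [h2]
  have : (Polynomial.C (2 * 4 ^ 0 / (Nat.factorial (2 * 0 + 1)) : ℝ)) = Polynomial.C (2 : ℝ) := by
    norm_num [Nat.factorial]
  rw [this, show (Polynomial.C (1/2 : ℝ) * (X + 1) - Polynomial.C (1/2 : ℝ))
      = Polynomial.C (1/2 : ℝ) * X from by ring, ← mul_assoc, ← map_mul]
  norm_num

private lemma Lid_eval_zero (n : ℕ) (hn : 1 ≤ n) : (Lid n).eval 0 = 0 := by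
  obtain ⟨m, rfl⟩ : ∃ m, n = m + 1 := ⟨n - 1, by omega⟩
  rw [Lid, eval_mul, eval_comp]
  have h : (Polynomial.C (1 / 2 : ℝ) * (X + 1)).eval 0 = ((1 / 2 : ℚ) : ℝ) := by
    simp

  rw [h, eval_map_rat, bern_odd_eval_half (m + 1)]
  simp

private lemma Lid_eval_one (n : ℕ) (hn : 1 ≤ n) : (Lid n).eval 1 = 0 := by
  rw [Lid, eval_mul, eval_comp]
  have h : (Polynomial.C (1 / 2 : ℝ) * (X + 1)).eval 1 = ((1 : ℚ) : ℝ) := by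
    simp
    norm_num

  rw [h, eval_map_rat, Polynomial.bernoulli_eval_one,
    bernoulli'_eq_zero_of_odd ⟨n, by ring⟩ (by omega)]
  simp

private lemma Lid_second (n : ℕ) (hn : 1 ≤ n) :
    derivative (derivative (Lid n)) = Lid (n - 1) := by
  obtain ⟨m, rfl⟩ : ∃ m, n = m + 1 := ⟨n - 1, by omega⟩
  simp only [Nat.add_sub_cancel]
  have h1 : derivative (Polynomial.bernoulli (2 * (m + 1) + 1))
      = Polynomial.C (2 * (m : ℚ) + 3) * Polynomial.bernoulli (2 * m + 2) := by
    rw [show 2 * (m + 1) + 1 = (2 * m + 2) + 1 from by ring, deriv_bern_C]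
    congr 2
    push_cast
    ring
  have h2 : derivative (Polynomial.bernoulli (2 * m + 2))
      = Polynomial.C (2 * (m : ℚ) + 2) * Polynomial.bernoulli (2 * m + 1) := by
    rw [show 2 * m + 2 = (2 * m + 1) + 1 from rfl, deriv_bern_C]
    congr 2
    push_cast
    ring
  have hdd : derivative (derivative (Polynomial.bernoulli (2 * (m + 1) + 1)))
      = Polynomial.C ((2 * (m : ℚ) + 3) * (2 * (m : ℚ) + 2)) * Polynomial.bernoulli (2 * m + 1) := by
    rw [h1, derivative_mul, derivative_C, zero_mul, zero_add, h2, ← mul_assoc, ← map_mul]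
  have d1 : derivative (Lid (m + 1))
      = Polynomial.C (2 * 4 ^ (m + 1) / (Nat.factorial (2 * (m + 1) + 1)) : ℝ) *
        (Polynomial.C (1 / 2 : ℝ) *
          ((derivative (Polynomial.bernoulli (2 * (m + 1) + 1))).map (algebraMap ℚ ℝ)).comp
            (Polynomial.C (1 / 2 : ℝ) * (X + 1))) := by
    rw [Lid, derivative_mul, derivative_C, zero_mul, zero_add, deriv_comp_q]
  rw [d1, derivative_mul, derivative_C, zero_mul, zero_add, derivative_mul, derivative_C,
    zero_mul, zero_add, deriv_comp_q, hdd, Polynomial.map_mul, Polynomial.map_C, mul_comp,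
    C_comp, Lid]
  have hA : algebraMap ℚ ℝ ((2 * (m : ℚ) + 3) * (2 * (m : ℚ) + 2))
      = ((2 * (m : ℝ) + 3) * (2 * (m : ℝ) + 2)) := by
    rw [eq_ratCast]
    push_cast
    ring
  rw [hA]
  have hsc : (2 * 4 ^ m / (Nat.factorial (2 * m + 1)) : ℝ)
      = (2 * 4 ^ (m + 1) / (Nat.factorial (2 * (m + 1) + 1)) : ℝ) * (1 / 2) * (1 / 2) *
        ((2 * (m : ℝ) + 3) * (2 * (m : ℝ) + 2)) := by
    have e1 : (Nat.factorial (2 * (m + 1) + 1) : ℝ)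
        = (2 * (m : ℝ) + 3) * ((2 * (m : ℝ) + 2) * (Nat.factorial (2 * m + 1))) := by
      rw [show 2 * (m + 1) + 1 = (2 * m + 1) + 1 + 1 from by ring, Nat.factorial_succ,
        Nat.factorial_succ]
      push_cast
      ring
    rw [e1]
    have hfac : (0 : ℝ) < (Nat.factorial (2 * m + 1) : ℝ) := by positivity
    field_simp
    ring
  have hstep : Polynomial.C (2 * 4 ^ (m + 1) / (Nat.factorial (2 * (m + 1) + 1)) : ℝ) *
      (Polynomial.C (1 / 2 : ℝ) * (Polynomial.C (1 / 2 : ℝ) *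
        (Polynomial.C ((2 * (m : ℝ) + 3) * (2 * (m : ℝ) + 2)) *
          ((Polynomial.bernoulli (2 * m + 1)).map (algebraMap ℚ ℝ)).comp
            (Polynomial.C (1 / 2 : ℝ) * (X + 1)))))
      = Polynomial.C ((2 * 4 ^ (m + 1) / (Nat.factorial (2 * (m + 1) + 1)) : ℝ) * (1 / 2) * (1 / 2)
          * ((2 * (m : ℝ) + 3) * (2 * (m : ℝ) + 2))) *
        ((Polynomial.bernoulli (2 * m + 1)).map (algebraMap ℚ ℝ)).comp
          (Polynomial.C (1 / 2 : ℝ) * (X + 1)) := by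
    simp only [C_mul]
    ring
  rw [hstep, hsc]

private lemma Lid_deriv_one (n : ℕ) (hn : 1 ≤ n) :
    (Lid n).derivative.eval 1
      = 4 ^ n * ((_root_.bernoulli (2 * n) : ℚ) : ℝ) / (Nat.factorial (2 * n)) := by
  rw [Lid, derivative_mul, derivative_C, zero_mul, zero_add, deriv_comp_q]
  have h1 : derivative (Polynomial.bernoulli (2 * n + 1))
      = Polynomial.C (2 * (n : ℚ) + 1) * Polynomial.bernoulli (2 * n) := by
    rw [deriv_bern_C]
    congr 2
    push_cast
    ring
  rw [h1, Polynomial.map_mul, Polynomial.map_C, mul_comp, C_comp, eval_mul, eval_mul, eval_C,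
    eval_C, eval_mul, eval_C, eval_comp]
  have h : (Polynomial.C (1 / 2 : ℝ) * (X + 1)).eval 1 = ((1 : ℚ) : ℝ) := by
    simp
    norm_num

  rw [h, eval_map_rat, Polynomial.bernoulli_eval_one,
    bernoulli_eq_bernoulli'_of_ne_one (by omega : 2 * n ≠ 1) |>.symm]
  have hA : algebraMap ℚ ℝ (2 * (n : ℚ) + 1) = (2 * (n : ℝ) + 1) := by
    rw [eq_ratCast]; push_cast; ring
  rw [hA, show 2 * n + 1 = (2 * n) + 1 from rfl, Nat.factorial_succ]
  have hfac : (0 : ℝ) < (Nat.factorial (2 * n) : ℝ) := by positivity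
  push_cast
  field_simp

theorem zeta_even_lidstone (Λ : ℕ → Polynomial ℝ)
    (h0 : Λ 0 = Polynomial.X)
    (hrec : ∀ k : ℕ, 1 ≤ k →
      Polynomial.derivative (Polynomial.derivative (Λ k)) = Λ (k - 1))
    (hval : ∀ k : ℕ, 1 ≤ k → (Λ k).eval 0 = 0 ∧ (Λ k).eval 1 = 0) :
    ∀ n : ℕ, 0 < n →
      riemannZeta (2 * n)
          = (((-1 : ℝ) ^ (n + 1) * Real.pi ^ (2 * n) * ((Λ n).derivative.eval 1) / 2 : ℝ) : ℂ) ∧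
      ∑' k : ℕ, 1 / ((k : ℝ) + 1) ^ (2 * n)
          = (-1 : ℝ) ^ (n + 1) * Real.pi ^ (2 * n) * ((Λ n).derivative.eval 1) / 2 := by
  intro n hn
  have key : ∀ m : ℕ, 1 ≤ m → Λ m = Lid m := by
    intro m
    induction m with
    | zero => omega
    | succ k ih =>
      intro _
      apply poly_unique
      · rw [hrec (k + 1) (by omega), Lid_second (k + 1) (by omega)]
        simp only [Nat.add_sub_cancel]
        rcases Nat.eq_zero_or_pos k with h | h
        · rw [h, h0, Lid_zero]
        · exact ih h
      · rw [(hval (k + 1) (by omega)).1, Lid_eval_zero _ (by omega)]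
      · rw [(hval (k + 1) (by omega)).2, Lid_eval_one _ (by omega)]
  have hL : (Λ n).derivative.eval 1
      = 4 ^ n * ((_root_.bernoulli (2 * n) : ℚ) : ℝ) / (Nat.factorial (2 * n)) := by
    rw [key n hn, Lid_deriv_one n hn]
  have hfac : (0 : ℝ) < (Nat.factorial (2 * n) : ℝ) := by positivity
  have hpow : (2 : ℝ) ^ (2 * n - 1) = 4 ^ n / 2 := by
    have h4 : (4 : ℝ) ^ n = 2 ^ (2 * n) := by
      rw [show (4 : ℝ) = 2 ^ 2 from by norm_num, ← pow_mul]
    rw [h4, show 2 * n = (2 * n - 1) + 1 from by omega, pow_succ]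
    field_simp
    simp
  constructor
  · rw [riemannZeta_two_mul_nat hn.ne', hL]
    have hpowC : (2 : ℂ) ^ (2 * n - 1) = 4 ^ n / 2 := by
      have h4 : (4 : ℂ) ^ n = 2 ^ (2 * n) := by
        rw [show (4 : ℂ) = 2 ^ 2 from by norm_num, ← pow_mul]
      rw [h4, show 2 * n = (2 * n - 1) + 1 from by omega, pow_succ]
      field_simp
      simp
    have hfacC : ((Nat.factorial (2 * n) : ℂ)) ≠ 0 := by
      exact_mod_cast Nat.factorial_ne_zero (2 * n)
    rw [hpowC]
    push_cast
    field_simp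
  · have hS := hasSum_zeta_nat (k := n) hn.ne'
    have h := (hasSum_nat_add_iff' (f := fun k : ℕ => 1 / (k : ℝ) ^ (2 * n)) 1).mpr hS
    rw [Finset.range_one, Finset.sum_singleton] at h
    simp only [Nat.cast_zero, zero_pow (by omega : 2 * n ≠ 0), div_zero, sub_zero] at h
    have hfun : (fun k : ℕ => 1 / ((k : ℝ) + 1) ^ (2 * n))
        = fun k : ℕ => 1 / (((k + 1 : ℕ) : ℝ)) ^ (2 * n) := by
      funext k
      push_cast
      ring
    have hS' : HasSum (fun k : ℕ => 1 / ((k : ℝ) + 1) ^ (2 * n))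
        ((-1 : ℝ) ^ (n + 1) * (2 : ℝ) ^ (2 * n - 1) * Real.pi ^ (2 * n) *
          _root_.bernoulli (2 * n) / (Nat.factorial (2 * n))) := by
      rw [hfun]
      convert h using 1
    rw [hS'.tsum_eq, hL, hpow]
    field_simp
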